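/- On the poset of formal balls B(X,d) of a quasi-metric space, the open ball topology of the quasi-metric d⁺((x,r),(y,s)) = max(d(x,y) - r + s, 0) is finer than the Scott topology of the order (x,r) ≤ (y,s) iff d(x,y) ≤ r - s. -/

import Mathlib

open scoped ENNReal NNReal Classical

/-- A formal ball: a point together with a non-negative real radius. -/
structure FormalBall (X : Type*) where
  center : X
  radius : ℝ≥0

/-- A quasi-metric on `X`: a `[0,∞]`-valued distance with `d x x = 0`, the triangle
inequality, and `d x y = d y x = 0 → x = y`. -/
structure QuasiMetric (X : Type*) where
  d : X → X → ℝ≥0∞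
  refl : ∀ x, d x x = 0
  triangle : ∀ x y z, d x z ≤ d x y + d y z
  separated : ∀ x y, d x y = 0 → d y x = 0 → x = y

/-- The order on formal balls: `(x,r) ≤ (y,s)` iff `d x y ≤ r - s`
(equivalently `s ≤ r` and `d x y ≤ r - s`). -/
def ballLE {X : Type*} (q : QuasiMetric X) (b c : FormalBall X) : Prop :=
  c.radius ≤ b.radius ∧ q.d b.center c.center ≤ ↑(b.radius - c.radius)

/-- The partial order of formal balls `B(X,d)`. -/
def ballOrder {X : Type*} (q : QuasiMetric X) : PartialOrder (FormalBall X) where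
  le := ballLE q
  le_refl b := ⟨le_rfl, by simp [ballLE, q.refl]⟩
  le_trans a b c hab hbc := ⟨hbc.1.trans hab.1, by
    calc q.d a.center c.center ≤ q.d a.center b.center + q.d b.center c.center :=
          q.triangle _ _ _
      _ ≤ ↑(a.radius - b.radius) + ↑(b.radius - c.radius) := add_le_add hab.2 hbc.2
      _ = ↑(a.radius - c.radius) := by
          rw [← ENNReal.coe_add, tsub_add_tsub_cancel hab.1 hbc.1]⟩
  le_antisymm a b hab hba := by
    have hr : b.radius = a.radius := le_antisymm hab.1 hba.1
    have h1 : q.d a.center b.center = 0 := le_antisymm (by simpa [hr] using hab.2) bot_le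
    have h2 : q.d b.center a.center = 0 := le_antisymm (by simpa [hr] using hba.2) bot_le
    have hc := q.separated _ _ h1 h2
    cases a; cases b; simp_all

/-- Scott-open: upward closed and inaccessible by suprema of nonempty directed sets. -/
def ScottOpen {α : Type*} [Preorder α] (U : Set α) : Prop :=
  (∀ a ∈ U, ∀ b, a ≤ b → b ∈ U) ∧
  ∀ S : Set α, S.Nonempty → DirectedOn (· ≤ ·) S → ∀ a, IsLUB S a → a ∈ U → (S ∩ U).Nonempty

/-- on `B(X,d)`, the open ball topology of the quasi-metric
`d⁺((x,r),(y,s)) = max (d(x,y) - r + s) 0` is finer than the Scott topology: every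
Scott-open set contains, around each of its points `(x,r)`, a `d⁺`-open ball
`{(y,s) : d(x,y) + s < r + ε}`. -/
theorem openBall_finer_than_scott {X : Type*} (q : QuasiMetric X) :
    letI := ballOrder q
    ∀ U : Set (FormalBall X), ScottOpen U → ∀ b ∈ U, ∃ ε : ℝ≥0, 0 < ε ∧
      {c : FormalBall X |
        q.d b.center c.center + (c.radius : ℝ≥0∞) < (b.radius : ℝ≥0∞) + (ε : ℝ≥0∞)} ⊆ U := by
  letI := ballOrder q
  intro U hU b hb
  obtain ⟨x, r⟩ := b
  set S : Set (FormalBall X) := {c | ∃ t : ℝ≥0, 0 < t ∧ c = ⟨x, r + t⟩} with hS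
  have hSne : S.Nonempty := ⟨⟨x, r + 1⟩, 1, one_pos, rfl⟩
  have hdir : DirectedOn (· ≤ ·) S := by
    rintro _ ⟨t1, ht1, rfl⟩ _ ⟨t2, ht2, rfl⟩
    refine ⟨⟨x, r + min t1 t2⟩, ⟨min t1 t2, lt_min ht1 ht2, rfl⟩, ?_, ?_⟩ <;>
      exact ⟨by simp [min_le_left, min_le_right], by simp [q.refl]⟩
  have hlub : IsLUB S ⟨x, r⟩ := by
    constructor
    · rintro _ ⟨t, ht, rfl⟩
      exact ⟨by simp, by simp [q.refl]⟩
    · rintro ⟨y, s⟩ hc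
      have key : ∀ t : ℝ≥0, 0 < t → s ≤ r + t ∧ q.d x y ≤ ↑((r + t) - s) := by
        intro t ht
        exact hc ⟨t, ht, rfl⟩
      have hs : s ≤ r := by
        refine le_of_forall_pos_le_add fun ε hε => (key ε hε).1
      refine ⟨hs, ?_⟩
      refine ENNReal.le_of_forall_pos_le_add fun ε hε _ => ?_
      calc q.d x y ≤ ↑((r + ε) - s) := (key ε hε).2
        _ ≤ ↑(r - s) + ↑ε := by
            rw [← ENNReal.coe_add]
            refine ENNReal.coe_le_coe.2 ?_
            rw [tsub_le_iff_right]
            calc r + ε ≤ (r - s + s) + ε := by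
                  exact add_le_add (le_tsub_add : r ≤ r - s + s) le_rfl
              _ = r - s + ε + s := by ring
  obtain ⟨_, ⟨t, ht, rfl⟩, hmem⟩ := hU.2 S hSne hdir _ hlub hb
  refine ⟨t, ht, fun c hc => ?_⟩
  refine hU.1 _ hmem c ?_
  simp only [Set.mem_setOf_eq] at hc
  have hcr : c.radius ≤ r + t := by
    have h2 : (c.radius : ℝ≥0∞) < ↑r + ↑t := le_add_self.trans_lt hc
    exact_mod_cast h2.le
  refine ⟨hcr, ?_⟩
  rw [ENNReal.coe_sub]
  refine ENNReal.le_sub_of_add_le_right ENNReal.coe_ne_top ?_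
  exact_mod_cast hc.le
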